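/- Let a be a positive, decreasing, summable sequence and C_a the associated Cantor set. Then dim_L C_a = 0 if and only if inf_k s_{k+1}/s_k = 0. In particular, if a is a doubling sequence, then dim_L C_a > 0. -/

import Mathlib

open scoped BigOperators
open Set

/-- `coverNum r F` is the minimal number of closed balls of radius `r`
needed to cover `F`. -/
noncomputable def coverNum (r : ℝ) (F : Set ℝ) : ℕ :=
  sInf {n : ℕ | ∃ S : Finset ℝ, S.card = n ∧ F ⊆ ⋃ x ∈ S, Metric.closedBall x r}

/-- The Assouad dimension of a set `F ⊆ ℝ`. -/
noncomputable def dimA (F : Set ℝ) : ℝ :=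
  sInf {α : ℝ | ∃ c > (0 : ℝ), ∃ ρ > (0 : ℝ), ∀ x ∈ F, ∀ r R : ℝ,
    0 < r → r < R → R < ρ →
    (coverNum r (Metric.closedBall x R ∩ F) : ℝ) ≤ c * (R / r) ^ α}

/-- The Lower Assouad dimension of a set `F ⊆ ℝ`. -/
noncomputable def dimL (F : Set ℝ) : ℝ :=
  sSup {α : ℝ | ∃ c > (0 : ℝ), ∃ ρ > (0 : ℝ), ∀ x ∈ F, ∀ r R : ℝ,
    0 < r → r < R → R < ρ →
    c * (R / r) ^ α ≤ (coverNum r (Metric.closedBall x R ∩ F) : ℝ)}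

/-- `E` is a complementary set of the (positive, summable) sequence `a`,
i.e. `E ∈ 𝒞_a`:  `E = [0, L] \ ⋃ U n` where the `U n` are disjoint open
intervals in `[0, L]` with `U n` of length `a n`, and `L = ∑ a`. -/
def IsComplementarySet (a : ℕ → ℝ) (E : Set ℝ) : Prop :=
  ∃ U : ℕ → Set ℝ,
    (∀ n, ∃ p q : ℝ, p < q ∧ q - p = a n ∧ U n = Set.Ioo p q) ∧
    (∀ n, U n ⊆ Set.Icc 0 (∑' i, a i)) ∧
    Pairwise (Function.onFun Disjoint U) ∧
    E = Set.Icc 0 (∑' i, a i) \ ⋃ n, U n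

/-- The decreasing complementary set `D_a = {∑_{i ≥ k} a i : k} ∪ {0}`,
obtained by placing the gaps in order from right to left starting at `L`. -/
noncomputable def decSet (a : ℕ → ℝ) : Set ℝ :=
  {0} ∪ {x : ℝ | ∃ k : ℕ, x = ∑' i : ℕ, a (k + i)}

/-- Length of the `j`-th closed interval (0-indexed, `j < 2 ^ k`) at step `k`
of the construction of the Cantor set associated to the gap sequence `a`:
it is the total length of all the gaps to be removed from that interval. -/
noncomputable def cantorLen (a : ℕ → ℝ) (k j : ℕ) : ℝ :=
  ∑' m : ℕ, ∑ i ∈ Finset.range (2 ^ m), a (2 ^ (k + m) - 1 + 2 ^ m * j + i)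

/-- Left endpoint of the `j`-th closed interval (0-indexed, `j < 2 ^ k`) at
step `k` of the construction of the Cantor set associated to `a`:  removing
from each step-`k` interval `I_j^k` the open gap of length `a (2 ^ k - 1 + j)`
produces the two step-`(k+1)` intervals `I_{2j}^{k+1}` and `I_{2j+1}^{k+1}`. -/
noncomputable def cantorLeft (a : ℕ → ℝ) : ℕ → ℕ → ℝ
  | 0, _ => 0
  | k + 1, j =>
    if j % 2 = 0 then cantorLeft a k (j / 2)
    else cantorLeft a k (j / 2) + cantorLen a (k + 1) (j - 1) + a (2 ^ k - 1 + j / 2)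

/-- The Cantor set `C_a` associated to the gap sequence `a`. -/
noncomputable def assocCantor (a : ℕ → ℝ) : Set ℝ :=
  ⋂ k : ℕ, ⋃ j ∈ Finset.range (2 ^ k),
    Set.Icc (cantorLeft a k j) (cantorLeft a k j + cantorLen a k j)

/-- `avgLen a n = s_n^{(a)} = 2 ^ (-n) ∑_{j ≥ 2 ^ n - 1} a j`, the average length of
the step-`n` intervals of `C_a` (with `a` 0-indexed, so this matches
`2^{-n} Σ_{j=2^n}^∞ a_j` for the 1-indexed sequence of the paper). -/
noncomputable def avgLen (a : ℕ → ℝ) (n : ℕ) : ℝ :=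
  (∑' j : ℕ, a (2 ^ n - 1 + j)) / 2 ^ n

/-- The gap sequence of the central Cantor set with ratio sequence `r`
(0-indexed): the gap `a i` has length `r 0 ⋯ r (n-1) * (1 - 2 * r n)` where
`2 ^ n - 1 ≤ i ≤ 2 ^ (n+1) - 2`, i.e. `n = log₂ (i + 1)`.  The central Cantor
set `C{r_j}` itself is `assocCantor (centralGaps r)`. -/
noncomputable def centralGaps (r : ℕ → ℝ) (i : ℕ) : ℝ :=
  (∏ j ∈ Finset.range (Nat.log 2 (i + 1)), r j) * (1 - 2 * r (Nat.log 2 (i + 1)))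

/-- A decreasing sequence `a` is doubling if `a n ≤ τ * a (2 * n)` (1-indexed)
for some constant `τ`; with 0-indexing this reads `a n ≤ τ * a (2 * n + 1)`. -/
def IsDoubling (a : ℕ → ℝ) : Prop :=
  ∃ τ : ℝ, ∀ n : ℕ, a n ≤ τ * a (2 * n + 1)

/-- A general sequence is doubling if its decreasing rearrangement is. -/
def IsDoublingGen (a : ℕ → ℝ) : Prop :=
  ∃ σ : Equiv.Perm ℕ, Antitone (a ∘ σ) ∧ IsDoubling (a ∘ σ)

namespace CantorAux

variable (a : ℕ → ℝ)

/-- tail sum starting at `2^n - 1`. -/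
noncomputable def tl (n : ℕ) : ℝ := ∑' j, a (2 ^ n - 1 + j)

/-- sum of the level-`n` gaps. -/
noncomputable def gp (n : ℕ) : ℝ := ∑ j ∈ Finset.range (2 ^ n), a (2 ^ n - 1 + j)

/-- the level-`k+m` gaps inside interval `I(k,j)`. -/
noncomputable def Fm (k j m : ℕ) : ℝ := ∑ i ∈ Finset.range (2 ^ m), a (2 ^ (k + m) - 1 + 2 ^ m * j + i)

variable {a}
variable (hpos : ∀ n, 0 < a n) (hdec : Antitone a) (hsum : Summable a)

section basic
include hsum

lemma tail_summable (c : ℕ) : Summable fun j => a (c + j) :=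
  hsum.comp_injective (add_right_injective c)

include hpos

lemma tail_le {c d : ℕ} (hcd : c ≤ d) : (∑' j, a (d + j)) ≤ ∑' j, a (c + j) := by
  obtain ⟨e, rfl⟩ := Nat.exists_eq_add_of_le hcd
  have h := Summable.sum_add_tsum_nat_add (f := fun j => a (c + j)) e (tail_summable hsum c)
  have h2 : (∑' j, a (c + e + j)) = ∑' j, a (c + (j + e)) := by
    congr 1; ext j; congr 1; omega
  rw [h2, ← h]
  have : 0 ≤ ∑ i ∈ Finset.range e, a (c + i) :=
    Finset.sum_nonneg fun i _ => (hpos (c + i)).le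
  linarith

lemma tl_pos (n : ℕ) : 0 < tl a n := by
  have h1 : a (2 ^ n - 1 + 0) ≤ tl a n :=
    Summable.le_tsum (tail_summable hsum _) 0 (fun j _ => (hpos _).le)
  have := hpos (2 ^ n - 1 + 0)
  linarith

omit hpos in
lemma tl_succ (n : ℕ) : tl a n = gp a n + tl a (n + 1) := by
  have h := Summable.sum_add_tsum_nat_add (f := fun j => a (2 ^ n - 1 + j)) (2 ^ n) (tail_summable hsum _)
  have h2 : (∑' j, a (2 ^ n - 1 + (j + 2 ^ n))) = tl a (n + 1) := by
    unfold tl; congr 1; ext j; congr 1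
    have : 1 ≤ 2 ^ n := Nat.one_le_two_pow
    have : 2 ^ (n + 1) = 2 ^ n + 2 ^ n := by ring
    omega
  rw [tl, ← h, h2, gp]

omit hsum in
lemma gp_pos (n : ℕ) : 0 < gp a n :=
  Finset.sum_pos (fun i _ => hpos _) (by simp [Finset.nonempty_range_iff])

lemma tl_anti {c d : ℕ} (hcd : c ≤ d) : tl a d ≤ tl a c :=
  tail_le hpos hsum (by
    have : (2:ℕ) ^ c ≤ 2 ^ d := Nat.pow_le_pow_right (by norm_num) hcd
    omega)

lemma tl_tendsto : Filter.Tendsto (tl a) Filter.atTop (nhds 0) := by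
  have hb : ∀ n, tl a n ≤ ∑' k, a (k + n) := by
    intro n
    have h1 : tl a n ≤ ∑' j, a (n + j) := tail_le hpos hsum (by have := Nat.lt_two_pow_self (n := n); omega)
    have h2 : (∑' j, a (n + j)) = ∑' k, a (k + n) := by congr 1; ext j; congr 1; omega
    linarith
  have h0 : ∀ n, 0 ≤ tl a n := fun n => (tl_pos hpos hsum n).le
  exact squeeze_zero h0 hb (tendsto_sum_nat_add a)

end basic



section fm
include hpos hdec hsum

omit hdec hsum in
lemma Fm_nonneg (k j m : ℕ) : 0 ≤ Fm a k j m :=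
  Finset.sum_nonneg fun i _ => (hpos _).le

omit hpos hdec hsum in
lemma cantorLen_eq (k j : ℕ) : cantorLen a k j = ∑' m, Fm a k j m := rfl

omit hpos hsum in
lemma Fm_le (k j m : ℕ) : Fm a k j m ≤ 2 ^ m * a (2 ^ (k + m) - 1) := by
  have h : ∀ i ∈ Finset.range (2 ^ m), a (2 ^ (k + m) - 1 + 2 ^ m * j + i) ≤ a (2 ^ (k + m) - 1) :=
    fun i _ => hdec (by omega)
  calc Fm a k j m ≤ ∑ _i ∈ Finset.range (2 ^ m), a (2 ^ (k + m) - 1) := Finset.sum_le_sum h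
    _ = 2 ^ m * a (2 ^ (k + m) - 1) := by simp [Finset.sum_const, mul_comm]

omit hpos hsum in
lemma gp_ge (n : ℕ) : 2 ^ n * a (2 ^ (n + 1) - 1) ≤ gp a n := by
  have h : ∀ i ∈ Finset.range (2 ^ n), a (2 ^ (n + 1) - 1) ≤ a (2 ^ n - 1 + i) := by
    intro i hi
    simp only [Finset.mem_range] at hi
    refine hdec ?_
    have e1 : (2:ℕ) ^ (n + 1) = 2 ^ n + 2 ^ n := by ring
    omega
  calc (2:ℝ) ^ n * a (2 ^ (n + 1) - 1) = ∑ _i ∈ Finset.range (2 ^ n), a (2 ^ (n + 1) - 1) := by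
        simp [Finset.sum_const, mul_comm]
    _ ≤ gp a n := Finset.sum_le_sum h

omit hpos hsum in
lemma gp_le (n : ℕ) : gp a (n + 1) ≤ 2 ^ (n + 1) * a (2 ^ (n + 1) - 2) := by
  have h : ∀ i ∈ Finset.range (2 ^ (n + 1)), a (2 ^ (n + 1) - 1 + i) ≤ a (2 ^ (n + 1) - 2) := by
    intro i hi
    refine hdec ?_
    have : (1:ℕ) ≤ 2 ^ (n + 1) := Nat.one_le_two_pow
    omega
  calc gp a (n + 1) ≤ ∑ _i ∈ Finset.range (2 ^ (n + 1)), a (2 ^ (n + 1) - 2) := Finset.sum_le_sum h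
    _ = 2 ^ (n + 1) * a (2 ^ (n + 1) - 2) := by simp [Finset.sum_const, mul_comm]

omit hdec in
lemma gp_partial (n M : ℕ) : ∑ m ∈ Finset.range M, gp a (n + m) = tl a n - tl a (n + M) := by
  induction M with
  | zero => simp
  | succ M ih =>
      rw [Finset.sum_range_succ, ih]
      have h := tl_succ hsum (n + M)
      have e : n + M + 1 = n + (M + 1) := by omega
      rw [e] at h
      linarith

omit hdec in
lemma gp_partial_le (n M : ℕ) : ∑ m ∈ Finset.range M, gp a (n + m) ≤ tl a n := by
  rw [gp_partial hpos hsum]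
  have := tl_pos hpos hsum (n + M)
  linarith

lemma summable_Fm (k j : ℕ) : Summable (Fm a k j) := by
  refine summable_of_sum_range_le (Fm_nonneg hpos k j) (c := a (2 ^ k - 1 + j) + 2 * tl a 0) ?_
  intro M
  match M with
  | 0 =>
    simp only [Finset.range_zero, Finset.sum_empty]
    have h1 := hpos (2 ^ k - 1 + j)
    have h2 := tl_pos hpos hsum 0
    linarith
  | (M + 1) =>
    rw [Finset.sum_range_succ']
    have h0 : Fm a k j 0 = a (2 ^ k - 1 + j) := by simp [Fm]
    have hstep : ∀ m, Fm a k j (m + 1) ≤ 2 * gp a m := by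
      intro m
      have h1 := Fm_le hdec k j (m + 1)
      have h2 : a (2 ^ (k + (m + 1)) - 1) ≤ a (2 ^ (m + 1) - 1) := by
        refine hdec ?_
        have : (2:ℕ) ^ (m + 1) ≤ 2 ^ (k + (m + 1)) := Nat.pow_le_pow_right (by norm_num) (by omega)
        omega
      have h3 := gp_ge hdec m
      have hp : (0:ℝ) < 2 ^ m := by positivity
      -- 2^(m+1) * a(2^(m+1)-1) = 2 * (2^m * a (2^(m+1)-1)) ≤ 2 * gp a m
      calc Fm a k j (m + 1) ≤ 2 ^ (m + 1) * a (2 ^ (k + (m + 1)) - 1) := h1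
        _ ≤ 2 ^ (m + 1) * a (2 ^ (m + 1) - 1) := by
            refine mul_le_mul_of_nonneg_left h2 (by positivity)
        _ = 2 * (2 ^ m * a (2 ^ (m + 1) - 1)) := by ring
        _ ≤ 2 * gp a m := by linarith
    have hsumle : ∑ m ∈ Finset.range M, Fm a k j (m + 1) ≤ 2 * tl a 0 := by
      calc ∑ m ∈ Finset.range M, Fm a k j (m + 1) ≤ ∑ m ∈ Finset.range M, 2 * gp a m :=
            Finset.sum_le_sum fun m _ => hstep m
        _ = 2 * ∑ m ∈ Finset.range M, gp a (0 + m) := by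
            rw [Finset.mul_sum]; congr 1; ext m; rw [Nat.zero_add]
        _ ≤ 2 * tl a 0 := by linarith [gp_partial_le hpos hsum 0 M]
    rw [h0]
    linarith

omit hdec hsum in
lemma cantorLen_nonneg (k j : ℕ) : 0 ≤ cantorLen a k j :=
  tsum_nonneg (Fm_nonneg hpos k j)

lemma cantorLen_le (k j : ℕ) : cantorLen a (k + 1) j ≤ tl a k / 2 ^ k := by
  refine Summable.tsum_le_of_sum_range_le (summable_Fm hpos hdec hsum (k + 1) j) ?_
  intro M
  have hstep : ∀ m, Fm a (k + 1) j m ≤ gp a (k + m) / 2 ^ k := by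
    intro m
    have h1 := Fm_le hdec (k + 1) j m
    have h3 := gp_ge hdec (k + m)
    have e : k + 1 + m = k + m + 1 := by omega
    rw [e] at h1
    have hp : (0:ℝ) < 2 ^ (k + m) := by positivity
    have hq : (0:ℝ) < 2 ^ m := by positivity
    -- Fm ≤ 2^m * a(2^(k+m+1)-1) ≤ 2^m * gp a (k+m) / 2^(k+m) = gp a (k+m)/2^k
    have h4 : (2:ℝ) ^ m * a (2 ^ (k + m + 1) - 1) ≤ 2 ^ m * (gp a (k + m) / 2 ^ (k + m)) := by
      have h5 : a (2 ^ (k + m + 1) - 1) ≤ gp a (k + m) / 2 ^ (k + m) := by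
        rw [le_div_iff₀ hp]
        linarith [gp_ge hdec (k + m)]
      exact mul_le_mul_of_nonneg_left h5 (by positivity)
    have e2 : (2:ℝ) ^ m * (gp a (k + m) / 2 ^ (k + m)) = gp a (k + m) / 2 ^ k := by
      rw [pow_add]
      field_simp
    linarith
  calc ∑ m ∈ Finset.range M, Fm a (k + 1) j m ≤ ∑ m ∈ Finset.range M, gp a (k + m) / 2 ^ k :=
        Finset.sum_le_sum fun m _ => hstep m
    _ = (∑ m ∈ Finset.range M, gp a (k + m)) / 2 ^ k := by rw [Finset.sum_div]
    _ ≤ tl a k / 2 ^ k := by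
        have h := gp_partial_le hpos hsum k M
        gcongr

set_option maxHeartbeats 1000000 in
lemma cantorLen_ge (k j : ℕ) (hj : j < 2 ^ k) : tl a (k + 1) / 2 ^ (k + 1) ≤ cantorLen a k j := by
  -- Fm a k j m ≥ 2^m * a (2^(k+m+1) - 2), and gp a (k+m+1) ≤ 2^(k+m+1) * a(2^(k+m+1)-2)
  have hFm_ge : ∀ m, 2 ^ m * a (2 ^ (k + m + 1) - 2) ≤ Fm a k j m := by
    intro m
    have h : ∀ i ∈ Finset.range (2 ^ m), a (2 ^ (k + m + 1) - 2) ≤ a (2 ^ (k + m) - 1 + 2 ^ m * j + i) := by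
      intro i hi
      simp only [Finset.mem_range] at hi
      refine hdec ?_
      have e1 : (2:ℕ) ^ (k + m + 1) = 2 ^ (k + m) + 2 ^ (k + m) := by ring
      have e3 : (1:ℕ) ≤ 2 ^ (k + m) := Nat.one_le_two_pow
      have h4 : (1:ℕ) ≤ 2 ^ m := Nat.one_le_two_pow
      have h2' : 2 ^ m * j + 2 ^ m ≤ 2 ^ (k + m) := by
        have h1 : j + 1 ≤ 2 ^ k := hj
        have h2 : 2 ^ m * (j + 1) ≤ 2 ^ m * 2 ^ k := Nat.mul_le_mul_left _ h1
        have e2 : (2:ℕ) ^ m * 2 ^ k = 2 ^ (k + m) := by rw [← pow_add]; congr 1; omega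
        rw [Nat.mul_succ] at h2
        omega
      omega
    calc (2:ℝ) ^ m * a (2 ^ (k + m + 1) - 2)
        = ∑ _i ∈ Finset.range (2 ^ m), a (2 ^ (k + m + 1) - 2) := by simp [Finset.sum_const, mul_comm]
      _ ≤ Fm a k j m := Finset.sum_le_sum h
  have hgp_le : ∀ m, gp a (k + 1 + m) ≤ 2 ^ (k + 1) * Fm a k j m := by
    intro m
    have h1 := gp_le hdec (k + m)
    have e : k + m + 1 = k + 1 + m := by omega
    rw [e] at h1
    have h2 := hFm_ge m
    have e2 : (2:ℝ) ^ (k + 1 + m) = 2 ^ (k + 1) * 2 ^ m := by rw [← pow_add]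
    calc gp a (k + 1 + m) ≤ 2 ^ (k + 1 + m) * a (2 ^ (k + 1 + m) - 2) := h1
      _ = 2 ^ (k + 1) * (2 ^ m * a (2 ^ (k + 1 + m) - 2)) := by rw [e2]; ring
      _ ≤ 2 ^ (k + 1) * Fm a k j m := by
          have h4 := hFm_ge m
          have e3 : k + m + 1 = k + 1 + m := by omega
          rw [e3] at h4
          exact mul_le_mul_of_nonneg_left h4 (by positivity)
  -- partial sums of gp ≤ 2^(k+1) * cantorLen
  have hM : ∀ M, tl a (k + 1) - tl a (k + 1 + M) ≤ 2 ^ (k + 1) * cantorLen a k j := by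
    intro M
    rw [← gp_partial hpos hsum (k + 1) M]
    calc ∑ m ∈ Finset.range M, gp a (k + 1 + m) ≤ ∑ m ∈ Finset.range M, 2 ^ (k + 1) * Fm a k j m :=
          Finset.sum_le_sum fun m _ => hgp_le m
      _ = 2 ^ (k + 1) * ∑ m ∈ Finset.range M, Fm a k j m := by rw [Finset.mul_sum]
      _ ≤ 2 ^ (k + 1) * cantorLen a k j := by
          refine mul_le_mul_of_nonneg_left ?_ (by positivity)
          exact Summable.sum_le_tsum _ (fun m _ => Fm_nonneg hpos k j m) (summable_Fm hpos hdec hsum k j)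
  -- take the limit M → ∞
  have hlim : Filter.Tendsto (fun M => tl a (k + 1) - tl a (k + 1 + M)) Filter.atTop
      (nhds (tl a (k + 1))) := by
    have h1 : Filter.Tendsto (fun M : ℕ => tl a (k + 1 + M)) Filter.atTop (nhds 0) := by
      have h0 := (tl_tendsto hpos hsum).comp (Filter.tendsto_add_atTop_nat (k + 1))
      have he : (tl a ∘ fun n => n + (k + 1)) = fun M : ℕ => tl a (k + 1 + M) := by
        funext M
        show tl a (M + (k + 1)) = tl a (k + 1 + M)
        congr 1
        omega
      rwa [he] at h0
    simpa using Filter.Tendsto.sub (tendsto_const_nhds) h1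
  have hle : tl a (k + 1) ≤ 2 ^ (k + 1) * cantorLen a k j :=
    le_of_tendsto hlim (Filter.Eventually.of_forall hM)
  rw [div_le_iff₀ (by positivity)]
  linarith [hle]

end fm

section split
include hpos hdec hsum

omit hpos hdec hsum in
lemma Fm_zero (k j : ℕ) : Fm a k j 0 = a (2 ^ k - 1 + j) := by
  simp [Fm]

omit hpos hdec hsum in
lemma Fm_succ (k j m : ℕ) :
    Fm a k j (m + 1) = Fm a (k + 1) (2 * j) m + Fm a (k + 1) (2 * j + 1) m := by
  unfold Fm
  have e : (2:ℕ) ^ (m + 1) = 2 ^ m + 2 ^ m := by ring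
  rw [e, Finset.sum_range_add]
  congr 1
  · refine Finset.sum_congr rfl fun i _ => ?_
    congr 1
    have e1 : k + (m + 1) = k + 1 + m := by omega
    rw [e1]
    have h : (2 ^ m + 2 ^ m) * j = 2 ^ m * (2 * j) := by ring
    omega
  · refine Finset.sum_congr rfl fun i _ => ?_
    congr 1
    have e1 : k + (m + 1) = k + 1 + m := by omega
    rw [e1]
    have h : (2 ^ m + 2 ^ m) * j + 2 ^ m = 2 ^ m * (2 * j + 1) := by ring
    omega

lemma cantorLen_split (k j : ℕ) :
    cantorLen a k j
      = a (2 ^ k - 1 + j) + cantorLen a (k + 1) (2 * j) + cantorLen a (k + 1) (2 * j + 1) := by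
  rw [cantorLen_eq, Summable.tsum_eq_zero_add (summable_Fm hpos hdec hsum k j)]
  rw [tsum_congr (fun m => Fm_succ k j m)]
  rw [Summable.tsum_add (summable_Fm hpos hdec hsum (k + 1) (2 * j)) (summable_Fm hpos hdec hsum (k + 1) (2 * j + 1))]
  rw [Fm_zero, cantorLen_eq, cantorLen_eq]
  ring

end split

section geom
include hpos hdec hsum

omit hpos hdec hsum in
lemma cantorLeft_even (k j : ℕ) : cantorLeft a (k + 1) (2 * j) = cantorLeft a k j := by
  have h1 : (2 * j) % 2 = 0 := by omega
  have h2 : (2 * j) / 2 = j := by omega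
  simp [cantorLeft, h1, h2]

omit hpos hdec hsum in
lemma cantorLeft_odd (k j : ℕ) :
    cantorLeft a (k + 1) (2 * j + 1)
      = cantorLeft a k j + cantorLen a (k + 1) (2 * j) + a (2 ^ k - 1 + j) := by
  have h1 : (2 * j + 1) % 2 = 1 := by omega
  have h2 : (2 * j + 1) / 2 = j := by omega
  have h3 : 2 * j + 1 - 1 = 2 * j := by omega
  simp [cantorLeft, h1, h2, h3]

lemma right_split (k j : ℕ) :
    cantorLeft a k j + cantorLen a k j
      = cantorLeft a (k + 1) (2 * j + 1) + cantorLen a (k + 1) (2 * j + 1) := by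
  rw [cantorLeft_odd, cantorLen_split hpos hdec hsum k j]
  ring

lemma subset_even (k j : ℕ) :
    Icc (cantorLeft a (k + 1) (2 * j)) (cantorLeft a (k + 1) (2 * j) + cantorLen a (k + 1) (2 * j))
      ⊆ Icc (cantorLeft a k j) (cantorLeft a k j + cantorLen a k j) := by
  refine Icc_subset_Icc ?_ ?_
  · rw [cantorLeft_even]
  · rw [cantorLeft_even, cantorLen_split hpos hdec hsum k j]
    have h1 := hpos (2 ^ k - 1 + j)
    have h2 := cantorLen_nonneg hpos (k + 1) (2 * j + 1)
    linarith

lemma subset_odd (k j : ℕ) :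
    Icc (cantorLeft a (k + 1) (2 * j + 1))
        (cantorLeft a (k + 1) (2 * j + 1) + cantorLen a (k + 1) (2 * j + 1))
      ⊆ Icc (cantorLeft a k j) (cantorLeft a k j + cantorLen a k j) := by
  refine Icc_subset_Icc ?_ ?_
  · rw [cantorLeft_odd]
    have h1 := hpos (2 ^ k - 1 + j)
    have h2 := cantorLen_nonneg hpos (k + 1) (2 * j)
    linarith
  · rw [right_split hpos hdec hsum k j]

lemma subset_child (k i : ℕ) :
    Icc (cantorLeft a (k + 1) i) (cantorLeft a (k + 1) i + cantorLen a (k + 1) i)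
      ⊆ Icc (cantorLeft a k (i / 2)) (cantorLeft a k (i / 2) + cantorLen a k (i / 2)) := by
  rcases Nat.even_or_odd i with ⟨j, hj⟩ | ⟨j, hj⟩
  · obtain rfl : i = 2 * j := by omega
    rw [show 2 * j / 2 = j by omega]
    exact subset_even hpos hdec hsum k j
  · obtain rfl : i = 2 * j + 1 := by omega
    rw [show (2 * j + 1) / 2 = j by omega]
    exact subset_odd hpos hdec hsum k j

lemma subset_desc (k t i : ℕ) :
    Icc (cantorLeft a (k + t) i) (cantorLeft a (k + t) i + cantorLen a (k + t) i)
      ⊆ Icc (cantorLeft a k (i / 2 ^ t)) (cantorLeft a k (i / 2 ^ t) + cantorLen a k (i / 2 ^ t)) := by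
  induction t generalizing i with
  | zero => simp
  | succ t ih =>
      have e : k + (t + 1) = (k + t) + 1 := by omega
      rw [e]
      refine (subset_child hpos hdec hsum (k + t) i).trans ?_
      have := ih (i / 2)
      have e2 : i / 2 / 2 ^ t = i / 2 ^ (t + 1) := by
        rw [Nat.div_div_eq_div_mul]
        congr 1
        rw [pow_succ]
        ring
      rwa [e2] at this

omit hpos hdec hsum in
lemma cantorLeft_zero (k : ℕ) : cantorLeft a k 0 = 0 := by
  induction k with
  | zero => rfl
  | succ k ih =>
      have : (0:ℕ) = 2 * 0 := rfl
      rw [show cantorLeft a (k + 1) 0 = cantorLeft a (k + 1) (2 * 0) by norm_num]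
      rw [cantorLeft_even]
      exact ih

omit hpos hdec hsum in
lemma cantorLeft_pow_mul (k t j : ℕ) : cantorLeft a (k + t) (2 ^ t * j) = cantorLeft a k j := by
  induction t with
  | zero => simp
  | succ t ih =>
      have e : k + (t + 1) = (k + t) + 1 := by omega
      have e2 : (2:ℕ) ^ (t + 1) * j = 2 * (2 ^ t * j) := by ring
      rw [e, e2, cantorLeft_even]
      exact ih

lemma ordering (k : ℕ) : ∀ j, j + 1 < 2 ^ k →
    cantorLeft a k j + cantorLen a k j ≤ cantorLeft a k (j + 1) := by
  induction k with
  | zero => intro j hj; simp at hj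
  | succ k ih =>
      intro j hj
      rcases Nat.even_or_odd j with ⟨i, hi⟩ | ⟨i, hi⟩
      · have e : j = 2 * i := by omega
        subst e
        rw [cantorLeft_odd, cantorLeft_even]
        have h1 := hpos (2 ^ k - 1 + i)
        linarith
      · have e : j = 2 * i + 1 := by omega
        subst e
        have e2 : 2 * i + 1 + 1 = 2 * (i + 1) := by ring
        rw [e2, cantorLeft_even, ← right_split hpos hdec hsum k i]
        refine ih i ?_
        have e3 : (2:ℕ) ^ (k + 1) = 2 ^ k + 2 ^ k := by ring
        omega

lemma left_mono (k : ℕ) : ∀ j', j' < 2 ^ k → ∀ j, j ≤ j' → cantorLeft a k j ≤ cantorLeft a k j' := by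
  intro j'
  induction j' with
  | zero =>
      intro _ j hj
      obtain rfl : j = 0 := by omega
      exact le_rfl
  | succ j' ih =>
      intro hj' j hj
      rcases Nat.lt_or_ge j (j' + 1) with h1 | h1
      · have h2 := ih (by omega) j (by omega)
        have h3 := ordering hpos hdec hsum k j' (by omega)
        have h4 := cantorLen_nonneg hpos k j'
        linarith
      · obtain rfl : j = j' + 1 := by omega
        exact le_rfl

lemma left_sep (k : ℕ) {j j' : ℕ} (h : j < j') (hj' : j' < 2 ^ k) :
    cantorLeft a k j + cantorLen a k j ≤ cantorLeft a k j' := by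
  have h1 := ordering hpos hdec hsum k j (by omega)
  have h2 := left_mono hpos hdec hsum k j' hj' (j + 1) (by omega)
  linarith

lemma mem_assocCantor (k j : ℕ) (hj : j < 2 ^ k) : cantorLeft a k j ∈ assocCantor a := by
  rw [assocCantor, Set.mem_iInter]
  intro p
  simp only [Set.mem_iUnion, Finset.mem_range]
  rcases le_or_gt k p with hkp | hkp
  · obtain ⟨t, rfl⟩ := Nat.exists_eq_add_of_le hkp
    refine ⟨2 ^ t * j, ?_, ?_⟩
    · have h1 : (0:ℕ) < 2 ^ t := by positivity
      calc 2 ^ t * j < 2 ^ t * 2 ^ k := (mul_lt_mul_iff_right₀ h1).mpr hj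
        _ = 2 ^ (k + t) := by rw [← pow_add]; congr 1; omega
    · rw [cantorLeft_pow_mul]
      refine ⟨le_rfl, ?_⟩
      have := cantorLen_nonneg hpos (k + t) (2 ^ t * j)
      linarith
  · obtain ⟨t, rfl⟩ := Nat.exists_eq_add_of_le hkp.le
    refine ⟨j / 2 ^ t, ?_, ?_⟩
    · rw [Nat.div_lt_iff_lt_mul (by positivity : (0:ℕ) < 2 ^ t)]
      calc j < 2 ^ (p + t) := hj
        _ = 2 ^ p * 2 ^ t := by rw [← pow_add]
    · refine subset_desc hpos hdec hsum p t j ?_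
      refine ⟨le_rfl, ?_⟩
      have := cantorLen_nonneg hpos (p + t) j
      linarith

lemma assocCantor_subset (k : ℕ) :
    assocCantor a ⊆ ⋃ j ∈ Finset.range (2 ^ k),
      Icc (cantorLeft a k j) (cantorLeft a k j + cantorLen a k j) := fun x hx => by
  rw [assocCantor, Set.mem_iInter] at hx
  exact hx k

end geom

section cover

/-- the defining set of `coverNum`. -/
def coverSet (r : ℝ) (F : Set ℝ) : Set ℕ :=
  {n : ℕ | ∃ S : Finset ℝ, S.card = n ∧ F ⊆ ⋃ x ∈ S, Metric.closedBall x r}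

lemma coverNum_def (r : ℝ) (F : Set ℝ) : coverNum r F = sInf (coverSet r F) := rfl

lemma coverNum_le_card {r : ℝ} {F : Set ℝ} (S : Finset ℝ)
    (h : F ⊆ ⋃ x ∈ S, Metric.closedBall x r) : coverNum r F ≤ S.card :=
  Nat.sInf_le ⟨S, rfl, h⟩

lemma cover_Icc {r : ℝ} (hr : 0 < r) : ∀ M : ℕ, 1 ≤ M → ∀ A : ℝ,
    ∃ S : Finset ℝ, S.card ≤ M ∧ Icc A (A + 2 * r * M) ⊆ ⋃ x ∈ S, Metric.closedBall x r := by
  intro M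
  induction M with
  | zero => omega
  | succ M ih =>
    intro _ A
    rcases Nat.eq_zero_or_pos M with rfl | hM
    · refine ⟨{A + r}, by simp, ?_⟩
      intro x hx
      simp only [mem_Icc] at hx
      simp only [Finset.mem_singleton, Set.mem_iUnion, Metric.mem_closedBall]
      refine ⟨A + r, rfl, ?_⟩
      rw [Real.dist_eq, abs_le]
      push_cast at hx
      constructor <;> linarith
    · obtain ⟨S, hcard, hcov⟩ := ih hM (A + 2 * r)
      refine ⟨insert (A + r) S, ?_, ?_⟩
      · calc (insert (A + r) S).card ≤ S.card + 1 := Finset.card_insert_le _ _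
          _ ≤ M + 1 := by omega
      · intro x hx
        simp only [mem_Icc] at hx
        push_cast at hx
        rcases le_or_gt x (A + 2 * r) with h1 | h1
        · simp only [Set.mem_iUnion, Metric.mem_closedBall]
          refine ⟨A + r, by simp, ?_⟩
          rw [Real.dist_eq, abs_le]
          constructor <;> linarith
        · have h2 : x ∈ Icc (A + 2 * r) (A + 2 * r + 2 * r * M) := by
            refine ⟨h1.le, ?_⟩
            push_cast
            linarith
          have h3 := hcov h2
          simp only [Set.mem_iUnion, Metric.mem_closedBall] at h3 ⊢
          obtain ⟨y, hy1, hy2⟩ := h3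
          exact ⟨y, by simp [Finset.mem_insert]; tauto, hy2⟩

lemma coverNum_le_of_subset_Icc {r : ℝ} (hr : 0 < r) {F : Set ℝ} {A : ℝ} {M : ℕ} (hM : 1 ≤ M)
    (h : F ⊆ Icc A (A + 2 * r * M)) : coverNum r F ≤ M := by
  obtain ⟨S, hc, hcov⟩ := cover_Icc hr M hM A
  exact le_trans (coverNum_le_card S (h.trans hcov)) hc

lemma coverSet_nonempty {r : ℝ} (hr : 0 < r) {F : Set ℝ} {A B : ℝ} (h : F ⊆ Icc A B) :
    (coverSet r F).Nonempty := by
  set M := max 1 ⌈(B - A) / (2 * r)⌉₊ with hM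
  have hM1 : 1 ≤ M := le_max_left _ _
  obtain ⟨S, _, hcov⟩ := cover_Icc hr M hM1 A
  have hBA : B ≤ A + 2 * r * M := by
    have h1 : (B - A) / (2 * r) ≤ (⌈(B - A) / (2 * r)⌉₊ : ℝ) := Nat.le_ceil _
    have h2 : (⌈(B - A) / (2 * r)⌉₊ : ℝ) ≤ (M : ℝ) := by
      exact_mod_cast le_max_right 1 _
    have h3 : (B - A) / (2 * r) ≤ (M : ℝ) := le_trans h1 h2
    have h4 : 0 < 2 * r := by linarith
    rw [div_le_iff₀ h4] at h3
    linarith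
  exact ⟨S.card, S, rfl, (h.trans (Icc_subset_Icc_right hBA)).trans hcov⟩

lemma one_le_coverNum {r : ℝ} {F : Set ℝ} (hF : F.Nonempty) (hne : (coverSet r F).Nonempty) :
    1 ≤ coverNum r F := by
  rcases Nat.eq_zero_or_pos (coverNum r F) with h | h
  · exfalso
    rcases (Nat.sInf_eq_zero.mp h) with h0 | h0
    · obtain ⟨S, hS0, hcov⟩ := h0
      rw [Finset.card_eq_zero] at hS0
      subst hS0
      simp only [Finset.notMem_empty, Set.iUnion_of_empty, Set.iUnion_empty] at hcov
      exact hF.not_subset_empty hcov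
    · have : coverSet r F = ∅ := h0
      rw [this] at hne
      exact Set.not_nonempty_empty hne
  · exact h

lemma coverNum_lower {r : ℝ} {F : Set ℝ} (hne : (coverSet r F).Nonempty) (M : ℕ)
    (p : Fin M → ℝ) (hp : ∀ i, p i ∈ F) (hsep : ∀ i i', i ≠ i' → 2 * r < |p i - p i'|) :
    M ≤ coverNum r F := by
  refine le_csInf hne ?_
  rintro n ⟨S, rfl, hcov⟩
  have hc : ∀ i, ∃ x ∈ S, p i ∈ Metric.closedBall x r := by
    intro i
    have := hcov (hp i)
    simpa using this
  choose c hcS hcd using hc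
  have hinj : Function.Injective c := by
    intro i i' he
    by_contra hne'
    have hsep' := hsep i i' hne'
    have h1 : dist (p i) (c i) ≤ r := hcd i
    have h2 : dist (p i') (c i') ≤ r := hcd i'
    rw [← he] at h2
    have h3 : dist (p i) (p i') ≤ 2 * r :=
      le_trans (dist_triangle (p i) (c i) (p i')) (by rw [dist_comm (c i) (p i')]; linarith)
    rw [Real.dist_eq] at h3
    linarith
  calc M = (Finset.univ : Finset (Fin M)).card := by simp
    _ ≤ S.card := Finset.card_le_card_of_injOn c (fun i _ => hcS i) hinj.injOn

end cover

section lset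

/-- the defining set of `dimL`. -/
def LSet (F : Set ℝ) : Set ℝ :=
  {α : ℝ | ∃ c > (0 : ℝ), ∃ ρ > (0 : ℝ), ∀ x ∈ F, ∀ r R : ℝ,
    0 < r → r < R → R < ρ →
    c * (R / r) ^ α ≤ (coverNum r (Metric.closedBall x R ∩ F) : ℝ)}

lemma dimL_eq (F : Set ℝ) : dimL F = sSup (LSet F) := rfl

lemma ball_inter_subset_Icc (x R : ℝ) (F : Set ℝ) :
    Metric.closedBall x R ∩ F ⊆ Icc (x - R) (x + R) := by
  intro y hy
  have := hy.1
  rwa [Real.closedBall_eq_Icc] at this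

lemma nonpos_mem {F : Set ℝ} {α : ℝ} (hα : α ≤ 0) : α ∈ LSet F := by
  refine ⟨1, one_pos, 1, one_pos, ?_⟩
  intro x hx r R hr hrR hRρ
  have hxm : x ∈ Metric.closedBall x R ∩ F :=
    ⟨Metric.mem_closedBall_self (by linarith), hx⟩
  have hne := coverSet_nonempty hr (ball_inter_subset_Icc x R F)
  have h1 := one_le_coverNum ⟨x, hxm⟩ hne
  have h2 : (R / r) ^ α ≤ 1 :=
    Real.rpow_le_one_of_one_le_of_nonpos (by rw [le_div_iff₀ hr]; linarith) hα
  have h3 : (1:ℝ) ≤ (coverNum r (Metric.closedBall x R ∩ F) : ℝ) := by exact_mod_cast h1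
  linarith

lemma lset_bddAbove {F : Set ℝ} {x0 : ℝ} (hx0 : x0 ∈ F) : BddAbove (LSet F) := by
  refine ⟨1, ?_⟩
  rintro α ⟨c, hc, ρ, hρ, hprop⟩
  by_contra hα1
  push_neg at hα1
  -- choose T large
  set T : ℝ := max 2 ((2 / c) ^ (α - 1)⁻¹) + 1 with hT
  have hT2 : 2 < T := by
    have := le_max_left 2 ((2 / c) ^ (α - 1)⁻¹)
    simp only [hT]
    linarith
  have hT1 : 1 < T := by linarith
  have hTpos : 0 < T := by linarith
  have hTpow : 2 / c < T ^ (α - 1) := by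
    have h1 : (2 / c) ^ (α - 1)⁻¹ < T := by
      have := le_max_right 2 ((2 / c) ^ (α - 1)⁻¹)
      simp only [hT]
      linarith
    have h2 : 0 ≤ (2 / c) ^ (α - 1)⁻¹ := Real.rpow_nonneg (by positivity) _
    have h3 : ((2 / c) ^ (α - 1)⁻¹) ^ (α - 1) < T ^ (α - 1) :=
      Real.rpow_lt_rpow h2 h1 (by linarith)
    rwa [Real.rpow_inv_rpow (by positivity) (by linarith : α - 1 ≠ 0)] at h3
  set R : ℝ := ρ / 2 with hR
  have hRpos : 0 < R := by positivity
  set r : ℝ := R / T with hr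
  have hrpos : 0 < r := by positivity
  have hrR : r < R := by
    rw [hr, div_lt_iff₀ hTpos]
    nlinarith
  have hRρ : R < ρ := by rw [hR]; linarith
  have hmain := hprop x0 hx0 r R hrpos hrR hRρ
  have hRr : R / r = T := by
    rw [hr]
    field_simp
  rw [hRr] at hmain
  -- upper bound for coverNum
  set M : ℕ := ⌈T⌉₊ with hM
  have hM1 : 1 ≤ M := by
    rw [hM]
    exact Nat.one_le_ceil_iff.mpr hTpos
  have hcov : coverNum r (Metric.closedBall x0 R ∩ F) ≤ M := by
    refine coverNum_le_of_subset_Icc hrpos (A := x0 - R) hM1 ?_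
    refine (ball_inter_subset_Icc x0 R F).trans (Icc_subset_Icc_right ?_)
    have h1 : T ≤ (M : ℝ) := Nat.le_ceil T
    have h2 : R ≤ r * M := by
      rw [hr]
      rw [div_mul_eq_mul_div, le_div_iff₀ hTpos]
      nlinarith
    linarith
  have hcovR : (coverNum r (Metric.closedBall x0 R ∩ F) : ℝ) ≤ (M : ℝ) := by exact_mod_cast hcov
  have hMT : (M : ℝ) ≤ T + 1 := by
    rw [hM]
    exact (Nat.ceil_lt_add_one hTpos.le).le
  -- c * T ^ α > 2 * T ≥ T + 1 ≥ M : contradiction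
  have hsplit : T ^ α = T ^ (α - 1) * T := by
    have h := Real.rpow_add hTpos (α - 1) 1
    rw [Real.rpow_one] at h
    rw [show α - 1 + 1 = α by ring] at h
    exact h
  have h2T : 2 * T < c * T ^ α := by
    rw [hsplit]
    calc 2 * T = (2 / c) * T * c := by field_simp
      _ < T ^ (α - 1) * T * c := by
          have := mul_lt_mul_of_pos_right (mul_lt_mul_of_pos_right hTpow hTpos) hc
          linarith [this]
      _ = c * (T ^ (α - 1) * T) := by ring
  have : T + 1 ≤ 2 * T := by linarith
  linarith

end lset

section sprops
include hpos hdec hsum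

omit hdec in
lemma avg_pos (n : ℕ) : 0 < avgLen a n := by
  have := tl_pos hpos hsum n
  have h2 : (0:ℝ) < 2 ^ n := by positivity
  show 0 < tl a n / 2 ^ n
  positivity

omit hdec in
lemma avg_half (n : ℕ) : avgLen a (n + 1) < avgLen a n / 2 := by
  have h1 := tl_succ hsum n
  have h2 := gp_pos hpos n
  show tl a (n + 1) / 2 ^ (n + 1) < tl a n / 2 ^ n / 2
  rw [div_div, ← pow_succ]
  have h4 : (0:ℝ) < 2 ^ (n + 1) := by positivity
  have h3 : tl a (n + 1) < tl a n := by linarith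
  exact div_lt_div_of_pos_right h3 h4

omit hdec in
lemma avg_lt (n : ℕ) : avgLen a (n + 1) < avgLen a n := by
  have h1 := avg_half hpos hsum n
  have h2 := avg_pos hpos hsum n
  linarith

omit hdec in
lemma avg_anti {m n : ℕ} (h : m ≤ n) : avgLen a n ≤ avgLen a m := by
  induction n with
  | zero =>
      obtain rfl : m = 0 := by omega
      exact le_rfl
  | succ n ih =>
      rcases Nat.lt_or_ge m (n + 1) with h1 | h1
      · have := ih (by omega)
        have := avg_lt hpos hsum n
        linarith
      · obtain rfl : m = n + 1 := by omega
        exact le_rfl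

omit hdec in
lemma avg_tendsto : Filter.Tendsto (avgLen a) Filter.atTop (nhds 0) := by
  have hb : ∀ n, avgLen a n ≤ tl a n := by
    intro n
    have h1 := tl_pos hpos hsum n
    have h2 : (1:ℝ) ≤ 2 ^ n := one_le_pow₀ (by norm_num)
    show tl a n / 2 ^ n ≤ tl a n
    rw [div_le_iff₀ (by positivity)]
    nlinarith
  have h0 : ∀ n, 0 ≤ avgLen a n := fun n => (avg_pos hpos hsum n).le
  exact squeeze_zero h0 hb (tl_tendsto hpos hsum)

lemma len_le_avg (k j : ℕ) : cantorLen a (k + 1) j ≤ avgLen a k :=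
  cantorLen_le hpos hdec hsum k j

lemma avg_le_len (k j : ℕ) (hj : j < 2 ^ k) : avgLen a (k + 1) ≤ cantorLen a k j :=
  cantorLen_ge hpos hdec hsum k j hj

lemma avg_ge_pow (γ : ℝ) (hγle : ∀ k, γ * avgLen a k ≤ avgLen a (k + 1)) (hγ0 : 0 ≤ γ) :
    ∀ m t, γ ^ t * avgLen a m ≤ avgLen a (m + t) := by
  intro m t
  induction t with
  | zero => simp
  | succ t ih =>
      have h1 := hγle (m + t)
      have h2 : γ * (γ ^ t * avgLen a m) ≤ γ * avgLen a (m + t) :=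
        mul_le_mul_of_nonneg_left ih hγ0
      calc γ ^ (t + 1) * avgLen a m = γ * (γ ^ t * avgLen a m) := by ring
        _ ≤ γ * avgLen a (m + t) := h2
        _ ≤ avgLen a (m + t + 1) := h1

lemma zero_mem_cantor : (0:ℝ) ∈ assocCantor a := by
  have h := mem_assocCantor hpos hdec hsum 0 0 (by norm_num)
  rwa [cantorLeft_zero] at h

end sprops

section upper
include hpos hdec hsum

lemma lset_subset_nonpos
    (hinf : ∀ ε > (0:ℝ), ∃ k, avgLen a (k + 1) / avgLen a k < ε) :
    ∀ α ∈ LSet (assocCantor a), α ≤ 0 := by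
  rintro α ⟨c, hc, ρ, hρ, hprop⟩
  by_contra hα
  push_neg at hα
  -- choose a threshold
  set W : ℝ := (9 / c) ^ α⁻¹ with hW
  have hW0 : 0 ≤ W := Real.rpow_nonneg (by positivity) _
  set δ : ℝ := 1 / (2 * (W + 1)) with hδ
  have hδ0 : 0 < δ := by positivity
  -- find K0 with avgLen a K0 < 2 * ρ; then any k ≥ K0 works for the size constraint
  have htend := avg_tendsto hpos hsum
  have hK0 : ∃ K0, avgLen a K0 < 2 * ρ := by
    have := htend.eventually (eventually_lt_nhds (show (0:ℝ) < 2 * ρ by positivity))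
    obtain ⟨K0, hK0⟩ := this.exists
    exact ⟨K0, hK0⟩
  obtain ⟨K0, hK0⟩ := hK0
  -- minimum of the first K0+3 ratios is positive
  set K1 : ℕ := K0 + 2 with hK1
  have hratios : ∀ m, 0 < avgLen a (m + 1) / avgLen a m := by
    intro m
    have := avg_pos hpos hsum m
    have := avg_pos hpos hsum (m + 1)
    positivity
  -- take μ := min of ratios for m < K1
  have hμ : ∃ μ > (0:ℝ), ∀ m < K1, μ ≤ avgLen a (m + 1) / avgLen a m := by
    induction K1 with
    | zero => exact ⟨1, one_pos, fun m hm => absurd hm (by omega)⟩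
    | succ K ih =>
        obtain ⟨μ, hμ0, hμle⟩ := ih
        refine ⟨min μ (avgLen a (K + 1) / avgLen a K), lt_min hμ0 (hratios K), ?_⟩
        intro m hm
        rcases Nat.lt_or_ge m K with h1 | h1
        · exact le_trans (min_le_left _ _) (hμle m h1)
        · obtain rfl : m = K := by omega
          exact min_le_right _ _
  obtain ⟨μ, hμ0, hμle⟩ := hμ
  obtain ⟨k, hk⟩ := hinf (min δ μ) (lt_min hδ0 hμ0)
  have hkK : K1 ≤ k := by
    by_contra hlt
    push_neg at hlt
    have := hμle k hlt
    have h2 : min δ μ ≤ μ := min_le_right _ _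
    linarith
  have hkδ : avgLen a (k + 1) / avgLen a k < δ := lt_of_lt_of_le hk (min_le_left _ _)
  -- the scales
  set sk := avgLen a k with hsk
  set sk1 := avgLen a (k + 1) with hsk1
  have hskpos : 0 < sk := avg_pos hpos hsum k
  have hsk1pos : 0 < sk1 := avg_pos hpos hsum (k + 1)
  set R : ℝ := sk / 2 with hRdef
  set r : ℝ := sk1 with hrdef
  have hr0 : 0 < r := hsk1pos
  have hrR : r < R := by
    have := avg_half hpos hsum k
    simpa [hrdef, hRdef] using this
  have hRρ : R < ρ := by
    have h1 : avgLen a k ≤ avgLen a K0 := avg_anti hpos hsum (by omega)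
    have : sk < 2 * ρ := lt_of_le_of_lt h1 hK0
    rw [hRdef]
    linarith
  -- coverNum bound: C ∩ B(0, R) is inside the 8 leftmost level-(k+2) intervals
  have h0C := zero_mem_cantor hpos hdec hsum
  have hmain := hprop 0 h0C r R hr0 hrR hRρ
  -- k ≥ 2
  have hk2 : 2 ≤ k := by omega
  obtain ⟨k', rfl⟩ : ∃ k', k = k' + 2 := ⟨k - 2, by omega⟩
  -- bound the covering number by 8
  set S : Finset ℝ := (Finset.range 8).image (fun i => cantorLeft a (k' + 4) i + r) with hS
  have hsub : Metric.closedBall 0 R ∩ assocCantor a ⊆ ⋃ x ∈ S, Metric.closedBall x r := by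
    intro y hy
    obtain ⟨hy1, hy2⟩ := hy
    have hyR : |y| ≤ R := by
      have := hy1
      rwa [Metric.mem_closedBall, Real.dist_eq, sub_zero] at this
    -- y lies in some level-(k'+4) interval
    have := assocCantor_subset hpos hdec hsum (k' + 4) hy2
    simp only [Set.mem_iUnion, Finset.mem_range] at this
    obtain ⟨i, hilt, hiy⟩ := this
    have hi8 : i < 8 := by
      by_contra h8
      push_neg at h8
      -- then y ≥ cantorLeft a (k'+4) 8 = cantorLeft a (k'+1) 1 ≥ len(k'+1,0) ≥ avg (k'+2) = 2R
      have hy_ge : cantorLeft a (k' + 4) i ≤ y := hiy.1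
      have hmono : cantorLeft a (k' + 4) 8 ≤ cantorLeft a (k' + 4) i :=
        left_mono hpos hdec hsum (k' + 4) i hilt 8 h8
      have heq : cantorLeft a (k' + 4) 8 = cantorLeft a (k' + 1) 1 := by
        have := cantorLeft_pow_mul (a := a) (k' + 1) 3 1
        simpa using this
      have hsep : cantorLeft a (k' + 1) 0 + cantorLen a (k' + 1) 0 ≤ cantorLeft a (k' + 1) 1 := by
        refine left_sep hpos hdec hsum (k' + 1) (by omega) ?_
        have : (2:ℕ) ≤ 2 ^ (k' + 1) := by
          calc (2:ℕ) = 2 ^ 1 := by norm_num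
            _ ≤ 2 ^ (k' + 1) := Nat.pow_le_pow_right (by norm_num) (by omega)
        omega
      have hlen : avgLen a (k' + 2) ≤ cantorLen a (k' + 1) 0 :=
        avg_le_len hpos hdec hsum (k' + 1) 0 (by positivity)
      have hzero : cantorLeft a (k' + 1) 0 = 0 := cantorLeft_zero _
      have h2R : 2 * R = avgLen a (k' + 2) := by
        rw [hRdef, hsk]
        ring
      have : 2 * R ≤ y := by
        rw [h2R]
        calc avgLen a (k' + 2) ≤ cantorLen a (k' + 1) 0 := hlen
          _ ≤ cantorLeft a (k' + 1) 1 := by linarith [hsep, hzero]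
          _ = cantorLeft a (k' + 4) 8 := heq.symm
          _ ≤ cantorLeft a (k' + 4) i := hmono
          _ ≤ y := hy_ge
      have hRpos : 0 < R := by rw [hRdef]; positivity
      have : y ≤ R := le_trans (le_abs_self y) hyR
      linarith
    -- y is covered by the ball centred at cantorLeft + r
    simp only [hS, Set.mem_iUnion, Finset.mem_image, Finset.mem_range]
    refine ⟨cantorLeft a (k' + 4) i + r, ⟨i, hi8, rfl⟩, ?_⟩
    rw [Metric.mem_closedBall, Real.dist_eq, abs_le]
    have hlen_le : cantorLen a (k' + 4) i ≤ r := by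
      have h := len_le_avg hpos hdec hsum (k' + 3) i
      rw [show k' + 3 + 1 = k' + 4 by omega] at h
      have hrav : r = avgLen a (k' + 3) := by rw [hsk1]
      linarith
    obtain ⟨hyl, hyr⟩ := hiy
    constructor <;> [linarith; linarith]
  have hcov : coverNum r (Metric.closedBall 0 R ∩ assocCantor a) ≤ 8 := by
    refine le_trans (coverNum_le_card S hsub) ?_
    calc S.card ≤ (Finset.range 8).card := Finset.card_image_le
      _ = 8 := by simp
  have hcovR : (coverNum r (Metric.closedBall 0 R ∩ assocCantor a) : ℝ) ≤ 8 := by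
    exact_mod_cast hcov
  -- but c * (R/r)^α > 9
  have hRr : W + 1 < R / r := by
    have h1 : sk1 / sk < δ := hkδ
    have h2 : R / r = sk / (2 * sk1) := by
      rw [hRdef, hrdef]
      field_simp
    rw [h2]
    rw [hδ] at h1
    rw [div_lt_div_iff₀ hskpos (by positivity)] at h1
    rw [lt_div_iff₀ (by positivity)]
    linarith
  have hRr0 : (0:ℝ) < W + 1 := by linarith
  have hpow : 9 / c < (R / r) ^ α := by
    have h1 : W < R / r := by linarith
    have h2 : W ^ α < (R / r) ^ α := Real.rpow_lt_rpow hW0 h1 hα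
    rwa [hW, Real.rpow_inv_rpow (by positivity) (by linarith : α ≠ 0)] at h2
  have h9 : 9 < c * (R / r) ^ α := by
    rw [div_lt_iff₀ hc] at hpow
    linarith [hpow]
  linarith

end upper

section lower

lemma rpow_pow_le {β αx X : ℝ} (hβ : 1 ≤ β) (hα : 0 ≤ αx) (t : ℕ) (hX0 : 0 < X)
    (hX : X ≤ β ^ t) : X ^ αx ≤ (β ^ αx) ^ t := by
  have hβ0 : (0:ℝ) ≤ β := by linarith
  have h1 : X ^ αx ≤ (β ^ t) ^ αx := Real.rpow_le_rpow hX0.le hX hα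
  rwa [← Real.rpow_natCast β t, ← Real.rpow_mul hβ0, mul_comm, Real.rpow_mul hβ0,
    Real.rpow_natCast] at h1

lemma sqrt2_facts : 1 < Real.sqrt 2 ∧ Real.sqrt 2 ≤ 2 ∧ (Real.sqrt 2) ^ 2 = 2 := by
  have hsq : (Real.sqrt 2) ^ 2 = 2 := Real.sq_sqrt (by norm_num)
  have h1 : Real.sqrt 1 < Real.sqrt 2 := Real.sqrt_lt_sqrt (by norm_num) (by norm_num)
  rw [Real.sqrt_one] at h1
  have h2 : Real.sqrt 2 ≤ 2 := by nlinarith [Real.sqrt_nonneg 2]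
  exact ⟨h1, h2, hsq⟩

include hpos hdec hsum

set_option maxHeartbeats 2000000 in
lemma lset_pos_mem {γ : ℝ} (hγ : 0 < γ) (hγle : ∀ k, γ * avgLen a k ≤ avgLen a (k + 1)) :
    ∃ α > 0, α ∈ LSet (assocCantor a) := by
  classical
  obtain ⟨hs21, hs22, hs2sq⟩ := sqrt2_facts
  have hs0 := avg_pos hpos hsum 0
  have hγhalf : γ ≤ 1 / 2 := by
    have h1 := hγle 0
    have h2 := avg_half hpos hsum 0
    nlinarith
  set β : ℝ := γ⁻¹ with hβdef
  have hβ2 : 2 ≤ β := by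
    rw [hβdef]
    calc (2:ℝ) = (1 / 2)⁻¹ := by norm_num
      _ ≤ γ⁻¹ := by
          apply inv_anti₀ hγ hγhalf
  have hβ1 : 1 < β := by linarith
  have hβ0 : (0:ℝ) < β := by linarith
  set α : ℝ := Real.logb β (Real.sqrt 2) with hαdef
  have hα : 0 < α := Real.logb_pos hβ1 hs21
  have hβα : β ^ α = Real.sqrt 2 :=
    Real.rpow_logb hβ0 (by linarith) (by linarith)
  have hβα0 : 0 < β ^ α := by rw [hβα]; linarith
  -- the relation γ^m * avg ≤ avg shifted
  have hpow := avg_ge_pow hpos hdec hsum γ hγle hγ.le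
  refine ⟨α, hα, 1/8, by norm_num, avgLen a 0, hs0, ?_⟩
  intro x hx r R hr hrR hRρ
  have hR0 : 0 < R := lt_trans hr hrR
  -- N ≥ 1 always
  have hxmem : x ∈ Metric.closedBall x R ∩ assocCantor a :=
    ⟨Metric.mem_closedBall_self hR0.le, hx⟩
  have hcsne := coverSet_nonempty hr (ball_inter_subset_Icc x R (assocCantor a))
  have hN1 : (1:ℝ) ≤ (coverNum r (Metric.closedBall x R ∩ assocCantor a) : ℝ) := by
    exact_mod_cast one_le_coverNum ⟨x, hxmem⟩ hcsne
  -- (β^α)^4 = 4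
  have hβα4 : (β ^ α) ^ 4 = 4 := by
    rw [hβα, show (4:ℕ) = 2 * 2 from rfl, pow_mul, hs2sq]
    norm_num
  -- n := least with avg ≤ R
  have hex : ∃ n, avgLen a n ≤ R := by
    have h := (avg_tendsto hpos hsum).eventually (eventually_le_nhds hR0)
    exact h.exists
  obtain ⟨n, hnle, hnlt⟩ : ∃ n, avgLen a n ≤ R ∧ ∀ m < n, R < avgLen a m :=
    ⟨Nat.find hex, Nat.find_spec hex, fun m hm => not_le.mp (Nat.find_min hex hm)⟩
  have hn1 : 1 ≤ n := by
    rcases Nat.eq_zero_or_pos n with rfl | h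
    · exact absurd hnle (by linarith)
    · exact h
  obtain ⟨p, rfl⟩ : ∃ p, n = p + 1 := ⟨n - 1, by omega⟩
  have hRp : R < avgLen a p := hnlt p (by omega)
  -- the level-(p+2) interval containing x
  have hIx := assocCantor_subset hpos hdec hsum (p + 2) hx
  simp only [Set.mem_iUnion, Finset.mem_range] at hIx
  obtain ⟨jx, hjxlt, hjx⟩ := hIx
  have hlenI : cantorLen a (p + 2) jx ≤ R := by
    have h := len_le_avg hpos hdec hsum (p + 1) jx
    have h2 : avgLen a (p + 1) ≤ R := hnle
    calc cantorLen a (p + 1 + 1) jx ≤ avgLen a (p + 1) := h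
      _ ≤ R := h2
  have hIsub : Icc (cantorLeft a (p + 2) jx) (cantorLeft a (p + 2) jx + cantorLen a (p + 2) jx)
      ⊆ Metric.closedBall x R := by
    intro y hy
    rw [Metric.mem_closedBall, Real.dist_eq, abs_le]
    obtain ⟨h1, h2⟩ := hy
    obtain ⟨g1, g2⟩ := hjx
    constructor <;> linarith
  -- q := least with avg ≤ 2r
  have hex2 : ∃ q, avgLen a q ≤ 2 * r := by
    have h := (avg_tendsto hpos hsum).eventually (eventually_le_nhds (by linarith : (0:ℝ) < 2*r))
    exact h.exists
  obtain ⟨q, hqle, hqlt⟩ : ∃ q, avgLen a q ≤ 2 * r ∧ ∀ m < q, 2 * r < avgLen a m :=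
    ⟨Nat.find hex2, Nat.find_spec hex2, fun m hm => not_le.mp (Nat.find_min hex2 hm)⟩
  rcases le_or_gt q (p + 3) with hq | hq
  · -- small case
    have h1 : avgLen a (p + 3) ≤ 2 * r := le_trans (avg_anti hpos hsum hq) hqle
    have h2 : γ ^ 3 * avgLen a p ≤ avgLen a (p + 3) := hpow p 3
    have hγ3 : (0:ℝ) < γ ^ 3 := by positivity
    have hRr_le : R / r ≤ β ^ 4 := by
      have h4 : R / r ≤ 2 / γ ^ 3 := by
        rw [div_le_div_iff₀ hr hγ3]
        have h3 := mul_lt_mul_of_pos_right hRp hγ3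
        linarith
      have h5 : (2:ℝ) / γ ^ 3 = 2 * β ^ 3 := by
        rw [hβdef]
        field_simp
      have h6 : 2 * β ^ 3 ≤ β ^ 4 := by
        have hp3 : (0:ℝ) ≤ β ^ 3 := (pow_pos hβ0 3).le
        have he : β ^ 4 = β * β ^ 3 := by ring
        nlinarith [mul_nonneg (show (0:ℝ) ≤ β - 2 by linarith) hp3]
      linarith
    have h7 : (R / r) ^ α ≤ (β ^ α) ^ 4 :=
      rpow_pow_le (by linarith) hα.le 4 (by positivity) hRr_le
    rw [hβα4] at h7
    calc (1/8 : ℝ) * (R / r) ^ α ≤ (1/8) * 4 := by linarith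
      _ ≤ 1 := by norm_num
      _ ≤ _ := hN1
  · -- main case
    obtain ⟨t, rfl⟩ : ∃ t, q = p + 4 + t := ⟨q - (p + 4), by omega⟩
    -- the 2^t level-(p+2+t) descendants of I(p+2, jx)
    set Q : ℕ := p + 2 + t with hQ
    have hidx_lt : ∀ i : Fin (2 ^ t), 2 ^ t * jx + (i : ℕ) < 2 ^ Q := by
      intro i
      have h1 : (i : ℕ) < 2 ^ t := i.isLt
      have h2 : 2 ^ t * jx + 2 ^ t ≤ 2 ^ t * 2 ^ (p + 2) := by
        have : jx + 1 ≤ 2 ^ (p + 2) := hjxlt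
        nlinarith [this, Nat.one_le_two_pow (n := t)]
      have h3 : (2:ℕ) ^ t * 2 ^ (p + 2) = 2 ^ Q := by
        rw [← pow_add]
        congr 1
        omega
      omega
    set pts : Fin (2 ^ t) → ℝ := fun i => cantorLeft a Q (2 ^ t * jx + (i : ℕ)) with hpts
    have hpts_in_I : ∀ i : Fin (2 ^ t),
        pts i ∈ Icc (cantorLeft a (p + 2) jx)
          (cantorLeft a (p + 2) jx + cantorLen a (p + 2) jx) := by
      intro i
      have hmem : pts i ∈ Icc (cantorLeft a Q (2 ^ t * jx + (i : ℕ)))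
          (cantorLeft a Q (2 ^ t * jx + (i : ℕ)) + cantorLen a Q (2 ^ t * jx + (i : ℕ))) :=
        ⟨le_rfl, by linarith [cantorLen_nonneg hpos Q (2 ^ t * jx + (i : ℕ))]⟩
      have hdesc := subset_desc hpos hdec hsum (p + 2) t (2 ^ t * jx + (i : ℕ))
      have hdiv : (2 ^ t * jx + (i : ℕ)) / 2 ^ t = jx := by
        rw [Nat.mul_add_div (by positivity)]
        have : (i : ℕ) / 2 ^ t = 0 := Nat.div_eq_of_lt i.isLt
        omega
      rw [hdiv] at hdesc
      exact hdesc hmem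
    have hpts_mem : ∀ i : Fin (2 ^ t),
        pts i ∈ Metric.closedBall x R ∩ assocCantor a := by
      intro i
      refine ⟨hIsub (hpts_in_I i), ?_⟩
      exact mem_assocCantor hpos hdec hsum Q _ (hidx_lt i)
    have hsep : ∀ i i' : Fin (2 ^ t), i ≠ i' → 2 * r < |pts i - pts i'| := by
      have hkey : ∀ i i' : Fin (2 ^ t), (i : ℕ) < (i' : ℕ) → 2 * r < pts i' - pts i := by
        intro i i' hii
        have hlt : 2 ^ t * jx + (i : ℕ) < 2 ^ t * jx + (i' : ℕ) := by omega
        have hsep' := left_sep hpos hdec hsum Q hlt (hidx_lt i')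
        have hlen_ge : avgLen a (Q + 1) ≤ cantorLen a Q (2 ^ t * jx + (i : ℕ)) := by
          refine avg_le_len hpos hdec hsum Q _ ?_
          exact hidx_lt i
        have h2r : 2 * r < avgLen a (Q + 1) := by
          refine hqlt (Q + 1) ?_
          omega
        have : pts i + cantorLen a Q (2 ^ t * jx + (i : ℕ)) ≤ pts i' := hsep'
        linarith
      intro i i' hne
      rcases Nat.lt_or_ge (i : ℕ) (i' : ℕ) with h1 | h1
      · have := hkey i i' h1
        rw [abs_sub_comm]
        rw [abs_of_pos (by linarith)]
        linarith
      · have h2 : (i' : ℕ) < (i : ℕ) := by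
          rcases Nat.lt_or_ge (i' : ℕ) (i : ℕ) with h | h
          · exact h
          · exact absurd (Fin.ext (by omega)) hne
        have := hkey i' i h2
        rw [abs_of_pos (by linarith)]
        linarith
    have hNM := coverNum_lower hcsne (2 ^ t) pts hpts_mem hsep
    have hNMR : (2 ^ t : ℝ) ≤ (coverNum r (Metric.closedBall x R ∩ assocCantor a) : ℝ) := by
      exact_mod_cast hNM
    -- ratio bound
    have h2 : γ ^ (4 + t) * avgLen a p ≤ avgLen a (p + (4 + t)) := hpow p (4 + t)
    have hq_eq : p + (4 + t) = p + 4 + t := by omega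
    rw [hq_eq] at h2
    have hγ4t : (0:ℝ) < γ ^ (4 + t) := by positivity
    have hRr_le : R / r ≤ β ^ (5 + t) := by
      have h4 : R / r ≤ 2 / γ ^ (4 + t) := by
        rw [div_le_div_iff₀ hr hγ4t]
        have h3 := mul_lt_mul_of_pos_right hRp hγ4t
        linarith
      have h5 : (2:ℝ) / γ ^ (4 + t) = 2 * β ^ (4 + t) := by
        rw [hβdef]
        field_simp
        rw [← mul_pow, mul_one_div_cancel hγ.ne', one_pow]
      have h6 : 2 * β ^ (4 + t) ≤ β ^ (5 + t) := by
        have e : (5:ℕ) + t = (4 + t) + 1 := by omega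
        rw [e, pow_succ]
        nlinarith [mul_nonneg (show (0:ℝ) ≤ β - 2 by linarith) (pow_pos hβ0 (4 + t)).le]
      linarith
    have h7 : (R / r) ^ α ≤ (β ^ α) ^ (5 + t) :=
      rpow_pow_le (by linarith) hα.le (5 + t) (by positivity) hRr_le
    rw [hβα] at h7
    -- (1/8) * (√2)^(5+t) ≤ 2^t
    have h8 : (Real.sqrt 2) ^ (5 + t) ≤ 8 * 2 ^ t := by
      have e : (5:ℕ) + t = 2 * 2 + (t + 1) := by omega
      rw [e, pow_add, pow_mul, hs2sq]
      have h9 : (Real.sqrt 2) ^ (t + 1) ≤ 2 ^ (t + 1) :=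
        pow_le_pow_left₀ (Real.sqrt_nonneg 2) hs22 _
      have h10 : (2:ℝ) ^ (t + 1) = 2 * 2 ^ t := by ring
      norm_num
      linarith
    calc (1/8 : ℝ) * (R / r) ^ α ≤ (1/8) * (Real.sqrt 2) ^ (5 + t) := by
          have := Real.rpow_nonneg (show (0:ℝ) ≤ R / r by positivity) α
          linarith
      _ ≤ 2 ^ t := by linarith
      _ ≤ _ := hNMR

end lower

section final
include hpos hdec hsum

lemma doubling_gamma (hd : IsDoubling a) :
    ∃ τ : ℝ, 0 < τ ∧ ∀ k, 1 / (2 * τ) ≤ avgLen a (k + 1) / avgLen a k := by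
  obtain ⟨τ, hτ⟩ := hd
  have hτ0 : 0 < τ := by
    have h := hτ 0
    have h1 := hpos 0
    have h2 := hpos 1
    nlinarith
  refine ⟨τ, hτ0, ?_⟩
  intro k
  have key : tl a k ≤ τ * tl a (k + 1) := by
    have h1 : ∀ j, a (2 ^ k - 1 + j) ≤ τ * a (2 ^ (k + 1) - 1 + 2 * j) := by
      intro j
      have h := hτ (2 ^ k - 1 + j)
      have e : 2 * (2 ^ k - 1 + j) + 1 = 2 ^ (k + 1) - 1 + 2 * j := by
        have h1 : (1:ℕ) ≤ 2 ^ k := Nat.one_le_two_pow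
        have e2 : (2:ℕ) ^ (k + 1) = 2 ^ k + 2 ^ k := by ring
        omega
      rwa [e] at h
    have hsum1 : Summable (fun j => a (2 ^ (k + 1) - 1 + 2 * j)) :=
      hsum.comp_injective (fun i j h => by omega)
    have hsum2 : Summable (fun j => a (2 ^ (k + 1) - 1 + (2 * j + 1))) :=
      hsum.comp_injective (fun i j h => by omega)
    have h2 : tl a k ≤ ∑' j, τ * a (2 ^ (k + 1) - 1 + 2 * j) :=
      Summable.tsum_le_tsum h1 (tail_summable hsum _) (hsum1.mul_left τ)
    have h3 : (∑' j, τ * a (2 ^ (k + 1) - 1 + 2 * j))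
        = τ * ∑' j, a (2 ^ (k + 1) - 1 + 2 * j) := tsum_mul_left
    have h5 := tsum_even_add_odd (f := fun i => a (2 ^ (k + 1) - 1 + i)) hsum1 hsum2
    have h6 : (0:ℝ) ≤ ∑' j, a (2 ^ (k + 1) - 1 + (2 * j + 1)) :=
      tsum_nonneg fun j => (hpos _).le
    have h7 : (∑' j, a (2 ^ (k + 1) - 1 + 2 * j)) ≤ tl a (k + 1) := by
      calc (∑' j, a (2 ^ (k + 1) - 1 + 2 * j))
          ≤ (∑' j, a (2 ^ (k + 1) - 1 + 2 * j)) + ∑' j, a (2 ^ (k + 1) - 1 + (2 * j + 1)) :=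
            le_add_of_nonneg_right h6
        _ = ∑' i, a (2 ^ (k + 1) - 1 + i) := h5
        _ = tl a (k + 1) := rfl
    calc tl a k ≤ ∑' j, τ * a (2 ^ (k + 1) - 1 + 2 * j) := h2
      _ = τ * ∑' j, a (2 ^ (k + 1) - 1 + 2 * j) := h3
      _ ≤ τ * tl a (k + 1) := mul_le_mul_of_nonneg_left h7 hτ0.le
  have hak := avg_pos hpos hsum k
  rw [div_le_div_iff₀ (by positivity) hak]
  have e1 : avgLen a k = tl a k / 2 ^ k := rfl
  have e2 : avgLen a (k + 1) = tl a (k + 1) / 2 ^ (k + 1) := rfl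
  rw [e1, e2, one_mul, pow_succ, div_le_iff₀ (by positivity)]
  rw [div_mul_eq_mul_div, div_mul_eq_mul_div, le_div_iff₀ (by positivity)]
  have h2k : (0:ℝ) ≤ 2 * 2 ^ k := by positivity
  nlinarith [mul_le_mul_of_nonneg_right key h2k]

end final

end CantorAux

/-- `dim_L C_a = 0` iff `inf_k s_{k+1}/s_k = 0`; in particular a
doubling sequence has `dim_L C_a > 0`. -/
theorem dimL_assocCantor_eq_zero_iff
    (a : ℕ → ℝ) (hpos : ∀ n, 0 < a n) (hdec : Antitone a) (hsum : Summable a) :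
    (dimL (assocCantor a) = 0 ↔ (⨅ k : ℕ, avgLen a (k + 1) / avgLen a k) = 0) ∧
    (IsDoubling a → 0 < dimL (assocCantor a)) := by
  classical
  have hC0 := CantorAux.zero_mem_cantor hpos hdec hsum
  have hbdd := CantorAux.lset_bddAbove hC0
  have h0mem : (0:ℝ) ∈ CantorAux.LSet (assocCantor a) := CantorAux.nonpos_mem le_rfl
  have hne : (CantorAux.LSet (assocCantor a)).Nonempty := ⟨0, h0mem⟩
  have hratio_pos : ∀ k, 0 < avgLen a (k + 1) / avgLen a k := fun k =>
    div_pos (CantorAux.avg_pos hpos hsum (k + 1)) (CantorAux.avg_pos hpos hsum k)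
  have hbddb : BddBelow (Set.range fun k => avgLen a (k + 1) / avgLen a k) :=
    ⟨0, by rintro y ⟨k, rfl⟩; exact (hratio_pos k).le⟩
  have hinf_nonneg : 0 ≤ ⨅ k, avgLen a (k + 1) / avgLen a k :=
    le_ciInf fun k => (hratio_pos k).le
  have main_pos : ∀ γ : ℝ, 0 < γ → (∀ k, γ ≤ avgLen a (k + 1) / avgLen a k) →
      0 < dimL (assocCantor a) := by
    intro γ hγ0 hγle
    have hγle' : ∀ k, γ * avgLen a k ≤ avgLen a (k + 1) := by
      intro k
      have hk := CantorAux.avg_pos hpos hsum k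
      have h := hγle k
      rw [le_div_iff₀ hk] at h
      linarith
    obtain ⟨α, hαpos, hαmem⟩ := CantorAux.lset_pos_mem hpos hdec hsum hγ0 hγle'
    have hle : α ≤ dimL (assocCantor a) := le_csSup hbdd hαmem
    linarith
  constructor
  · constructor
    · intro hdim
      by_contra hinf
      have hγ : 0 < ⨅ k, avgLen a (k + 1) / avgLen a k :=
        lt_of_le_of_ne hinf_nonneg (Ne.symm hinf)
      have hγle : ∀ k, (⨅ k, avgLen a (k + 1) / avgLen a k) ≤ avgLen a (k + 1) / avgLen a k :=
        fun k => ciInf_le hbddb k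
      have h := main_pos _ hγ hγle
      rw [hdim] at h
      exact lt_irrefl 0 h
    · intro hinf
      have hsmall : ∀ ε > (0:ℝ), ∃ k, avgLen a (k + 1) / avgLen a k < ε := by
        intro ε hε
        by_contra hcon
        push_neg at hcon
        have h := le_ciInf hcon
        rw [hinf] at h
        linarith
      have hub := CantorAux.lset_subset_nonpos hpos hdec hsum hsmall
      have h1 : dimL (assocCantor a) ≤ 0 := csSup_le hne hub
      have h2 : 0 ≤ dimL (assocCantor a) := le_csSup hbdd h0mem
      linarith
  · intro hd
    obtain ⟨τ, hτ0, hτle⟩ := CantorAux.doubling_gamma hpos hdec hsum hd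
    exact main_pos (1 / (2 * τ)) (by positivity) hτle
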